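/- arXiv:1606.06210 — 2 statements merged into one kernel-verified Lean document; each statement's English description precedes it below -/
import Mathlib

section
/- Let A be a commutative local ring and n ≥ 1. Then every matrix in SL_n(A) (i.e., every n×n matrix over A of determinant 1) is a finite product of elementary transvections (matrices differing from the identity in exactly one off-diagonal entry). -/
open Matrix Matrix.TransvectionStruct

section Aux

variable {A : Type*} [CommRing A]

private def TP {n : ℕ} (M : Matrix (Fin n) (Fin n) A) : Prop :=
  ∃ L : List (TransvectionStruct (Fin n) A), M = (L.map toMatrix).prod

private lemma tp_of_mul_t {n : ℕ} {M : Matrix (Fin n) (Fin n) A} {i j : Fin n} (h : i ≠ j)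
    (c : A) (H : TP (M * transvection i j c)) : TP M := by
  obtain ⟨L, hL⟩ := H
  refine ⟨L ++ [⟨i, j, h, -c⟩], ?_⟩
  have hM : M = (M * transvection i j c) * transvection i j (-c) := by
    rw [Matrix.mul_assoc, transvection_mul_transvection_same _ _ h, add_neg_cancel,
      transvection_zero, Matrix.mul_one]
  rw [hM, hL]
  simp

private lemma tp_of_t_mul {n : ℕ} {M : Matrix (Fin n) (Fin n) A} {i j : Fin n} (h : i ≠ j)
    (c : A) (H : TP (transvection i j c * M)) : TP M := by
  obtain ⟨L, hL⟩ := H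
  refine ⟨⟨i, j, h, -c⟩ :: L, ?_⟩
  have hM : M = transvection i j (-c) * (transvection i j c * M) := by
    rw [← Matrix.mul_assoc, transvection_mul_transvection_same _ _ h, neg_add_cancel,
      transvection_zero, Matrix.one_mul]
  rw [hM, hL]
  simp

variable [IsLocalRing A]

private lemma exists_isUnit_of_sum {ι : Type*} (s : Finset ι) (f : ι → A)
    (h : IsUnit (∑ i ∈ s, f i)) : ∃ i ∈ s, IsUnit (f i) := by
  by_contra hc
  push_neg at hc
  have hmem : ∑ i ∈ s, f i ∈ IsLocalRing.maximalIdeal A :=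
    Ideal.sum_mem _ fun i hi => (IsLocalRing.mem_maximalIdeal _).mpr
      (mem_nonunits_iff.mpr (hc i hi))
  exact mem_nonunits_iff.mp ((IsLocalRing.mem_maximalIdeal _).mp hmem) h

private lemma exists_unit_row {n : ℕ} (M : Matrix (Fin n) (Fin n) A)
    (hM : M.det = 1) (i₀ : Fin n) : ∃ j, IsUnit (M i₀ j) := by
  have hinv : M * M⁻¹ = 1 := Matrix.mul_nonsing_inv M (by rw [hM]; exact isUnit_one)
  have h1 : ∑ j, M i₀ j * M⁻¹ j i₀ = 1 := by
    have := Matrix.ext_iff.mpr hinv i₀ i₀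
    simpa [Matrix.mul_apply] using this
  obtain ⟨j, _, hj⟩ := exists_isUnit_of_sum Finset.univ _ (h1 ▸ isUnit_one)
  exact ⟨j, isUnit_of_mul_isUnit_left hj⟩

private lemma clear {n : ℕ}
    (IH : ∀ M₀ : Matrix (Fin n) (Fin n) A, M₀.det = 1 → TP M₀) :
    ∀ (k : ℕ) (M : Matrix (Fin (n+1)) (Fin (n+1)) A), M.det = 1 →
      M (Fin.last n) (Fin.last n) = 1 →
      (∀ j : Fin (n+1), j ≠ Fin.last n → k ≤ (j : ℕ) → M (Fin.last n) j = 0) →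
      (∀ i : Fin (n+1), i ≠ Fin.last n → k ≤ (i : ℕ) → M i (Fin.last n) = 0) →
      TP M := by
  intro k
  induction k with
  | zero =>
    intro M hdet hpiv hrow hcol
    set e : Fin n ⊕ Unit ≃ Fin (n+1) :=
      (finSuccEquivLast.trans (Equiv.optionEquivSumPUnit (Fin n))).symm with he
    have hel : ∀ i : Fin n, e (Sum.inl i) = i.castSucc := by
      intro i; simp [he]
    have her : e (Sum.inr ()) = Fin.last n := by
      simp [he]
    set M₀ : Matrix (Fin n) (Fin n) A := M.submatrix Fin.castSucc Fin.castSucc with hM₀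
    have key : M = (reindexAlgEquiv A _ e) (fromBlocks M₀ 0 0 (1 : Matrix Unit Unit A)) := by
      ext a b
      rw [reindexAlgEquiv_apply, reindex_apply, submatrix_apply]
      rcases ha : e.symm a with a' | ⟨⟩ <;> rcases hb : e.symm b with b' | ⟨⟩
      · have ha' : a = a'.castSucc := by rw [← hel, ← ha, Equiv.apply_symm_apply]
        have hb' : b = b'.castSucc := by rw [← hel, ← hb, Equiv.apply_symm_apply]
        simp [ha', hb', hM₀]
      · have ha' : a = a'.castSucc := by rw [← hel, ← ha, Equiv.apply_symm_apply]
        have hb' : b = Fin.last n := by rw [← her, ← hb, Equiv.apply_symm_apply]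
        rw [ha', hb']
        simpa using hcol a'.castSucc (Fin.castSucc_lt_last a').ne (Nat.zero_le _)
      · have ha' : a = Fin.last n := by rw [← her, ← ha, Equiv.apply_symm_apply]
        have hb' : b = b'.castSucc := by rw [← hel, ← hb, Equiv.apply_symm_apply]
        rw [ha', hb']
        simpa using hrow b'.castSucc (Fin.castSucc_lt_last b').ne (Nat.zero_le _)
      · have ha' : a = Fin.last n := by rw [← her, ← ha, Equiv.apply_symm_apply]
        have hb' : b = Fin.last n := by rw [← her, ← hb, Equiv.apply_symm_apply]
        rw [ha', hb']
        simpa using hpiv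
    have hdet₀ : M₀.det = 1 := by
      have hh : M.det = M₀.det := by
        rw [key, reindexAlgEquiv_apply, det_reindex_self, det_fromBlocks_zero₂₁, det_one, mul_one]
      rw [← hh, hdet]
    obtain ⟨L, hL⟩ := IH M₀ hdet₀
    refine ⟨(L.map (sumInl Unit)).map (reindexEquiv e), ?_⟩
    have h1 : (L.map (toMatrix ∘ sumInl Unit)).prod =
        fromBlocks (L.map toMatrix).prod 0 0 (1 : Matrix Unit Unit A) := by
      simpa using sumInl_toMatrix_prod_mul (p := Unit)
        (1 : Matrix (Fin n) (Fin n) A) L (1 : Matrix Unit Unit A)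
    have h2 := toMatrix_reindexEquiv_prod (R := A) e (L.map (sumInl Unit))
    rw [key, List.map_map, h2, List.map_map, h1, ← hL]
  | succ k IHk =>
    intro M hdet hpiv hrow hcol
    by_cases hk : k < n
    · set l : Fin (n+1) := Fin.last n with hl
      set kf : Fin (n+1) := ⟨k, by omega⟩ with hkf
      have hkl : kf ≠ l := by
        rw [hkf, hl]
        exact fun h => Nat.ne_of_lt hk (by simpa using congrArg Fin.val h)
      set M₁ := M * transvection l kf (-(M l kf)) with hM₁
      set M₂ := transvection kf l (-(M₁ kf l)) * M₁ with hM₂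
      have e1 : ∀ a b, b ≠ kf → M₁ a b = M a b := by
        intro a b hb; rw [hM₁, mul_transvection_apply_of_ne _ _ _ _ hb]
      have e2 : ∀ a, M₁ a kf = M a kf + (-(M l kf)) * M a l := by
        intro a; rw [hM₁, mul_transvection_apply_same]
      have f1 : ∀ a b, a ≠ kf → M₂ a b = M₁ a b := by
        intro a b ha; rw [hM₂, transvection_mul_apply_of_ne _ _ _ _ ha]
      have f2 : ∀ b, M₂ kf b = M₁ kf b + (-(M₁ kf l)) * M₁ l b := by
        intro b; rw [hM₂, transvection_mul_apply_same]
      have hM₁ll : M₁ l l = 1 := by rw [e1 _ _ (Ne.symm hkl)]; exact hpiv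
      have hd2 : M₂.det = 1 := by
        rw [hM₂, det_mul, hM₁, det_mul, det_transvection_of_ne _ _ hkl,
          det_transvection_of_ne _ _ (Ne.symm hkl), hdet]
        ring
      have hp2 : M₂ l l = 1 := by rw [f1 _ _ (Ne.symm hkl)]; exact hM₁ll
      have hr2 : ∀ j : Fin (n+1), j ≠ l → k ≤ (j : ℕ) → M₂ l j = 0 := by
        intro j hj hkj
        rw [f1 _ _ (Ne.symm hkl)]
        by_cases hjk : j = kf
        · subst hjk; rw [e2, hpiv]; ring
        · rw [e1 _ _ hjk]
          refine hrow j hj ?_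
          have : (j : ℕ) ≠ k := fun h => hjk (Fin.ext h)
          omega
      have hc2 : ∀ i : Fin (n+1), i ≠ l → k ≤ (i : ℕ) → M₂ i l = 0 := by
        intro i hi hki
        by_cases hik : i = kf
        · subst hik; rw [f2, hM₁ll]; ring
        · rw [f1 _ _ hik, e1 _ _ (Ne.symm hkl)]
          refine hcol i hi ?_
          have : (i : ℕ) ≠ k := fun h => hik (Fin.ext h)
          omega
      have h2 : TP M₂ := IHk M₂ hd2 hp2 hr2 hc2
      have h1 : TP M₁ := tp_of_t_mul hkl _ (hM₂ ▸ h2)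
      exact tp_of_mul_t (Ne.symm hkl) _ (hM₁ ▸ h1)
    · apply IHk M hdet hpiv
      · intro j hj hkj
        have hj' : (j : ℕ) < n :=
          lt_of_le_of_ne (Nat.lt_succ_iff.mp j.isLt) (fun h => hj (Fin.ext h))
        exact absurd hkj (by omega)
      · intro i hi hki
        have hi' : (i : ℕ) < n :=
          lt_of_le_of_ne (Nat.lt_succ_iff.mp i.isLt) (fun h => hi (Fin.ext h))
        exact absurd hki (by omega)

private lemma tp_main : ∀ (n : ℕ) (M : Matrix (Fin n) (Fin n) A), M.det = 1 → TP M := by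
  intro n
  induction n with
  | zero => intro M _; exact ⟨[], Subsingleton.elim _ _⟩
  | succ n IH =>
    intro M hM
    rcases Nat.eq_zero_or_pos n with hn | hn
    · subst hn
      refine ⟨[], ?_⟩
      have h1 : M = 1 := by
        have h00 : M 0 0 = 1 := by rwa [Matrix.det_fin_one] at hM
        ext i j
        fin_cases i <;> fin_cases j
        simpa using h00
      simpa using h1
    · set l : Fin (n+1) := Fin.last n with hl
      have hl0 : (0 : Fin (n+1)) ≠ l := by
        intro h
        have := congrArg Fin.val h
        simp [hl] at this
        omega
      -- It suffices to treat matrices with a unit in the last row, off the last column.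
      have H : ∀ (N : Matrix (Fin (n+1)) (Fin (n+1)) A), N.det = 1 →
          ∀ j, j ≠ l → IsUnit (N l j) → TP N := by
        intro N hN j hjl hju
        set c := (1 - N l l) * (↑hju.unit⁻¹ : A) with hc
        set N₁ := N * transvection j l c with hN₁
        have hinv : (↑hju.unit⁻¹ : A) * N l j = 1 := hju.val_inv_mul
        have hp : N₁ l l = 1 := by
          rw [hN₁, mul_transvection_apply_same, hc, mul_assoc, hinv]
          ring
        have hd : N₁.det = 1 := by
          rw [hN₁, det_mul, det_transvection_of_ne _ _ hjl, hN, one_mul]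
        have h1 : TP N₁ := by
          apply clear IH n N₁ hd hp
          · intro j' hj' hnj'
            have : (j' : ℕ) < n :=
              lt_of_le_of_ne (Nat.lt_succ_iff.mp j'.isLt) (fun h => hj' (Fin.ext h))
            exact absurd hnj' (by omega)
          · intro i' hi' hni'
            have : (i' : ℕ) < n :=
              lt_of_le_of_ne (Nat.lt_succ_iff.mp i'.isLt) (fun h => hi' (Fin.ext h))
            exact absurd hni' (by omega)
        exact tp_of_mul_t hjl _ (hN₁ ▸ h1)
      obtain ⟨j, hju⟩ := exists_unit_row M hM l
      by_cases hjl : j = l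
      · -- the unit is the pivot itself; create a unit at position (l, 0) first
        subst hjl
        set c₀ := (1 - M l 0) * (↑hju.unit⁻¹ : A) with hc₀
        set N := M * transvection l 0 c₀ with hN
        have hinv : (↑hju.unit⁻¹ : A) * M l l = 1 := hju.val_inv_mul
        have hN0 : N l 0 = 1 := by
          rw [hN, mul_transvection_apply_same, hc₀, mul_assoc, hinv]
          ring
        have hNd : N.det = 1 := by
          rw [hN, det_mul, det_transvection_of_ne _ _ (Ne.symm hl0), hM, one_mul]
        have h1 : TP N := H N hNd 0 hl0 (hN0 ▸ isUnit_one)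
        exact tp_of_mul_t (Ne.symm hl0) _ (hN ▸ h1)
      · exact H M hM j hjl hju

end Aux

/-- Over a commutative local ring, every matrix of determinant `1` is a finite product of
elementary transvections (matrices of the form `1 + c • E i j` with `i ≠ j`). -/
theorem sl_n_generated_by_transvections
    (A : Type*) [CommRing A] [IsLocalRing A] (n : ℕ)
    (M : Matrix (Fin n) (Fin n) A) (hM : M.det = 1) :
    ∃ L : List (Matrix (Fin n) (Fin n) A),
      (∀ N ∈ L, ∃ (i j : Fin n) (c : A), i ≠ j ∧ N = Matrix.transvection i j c) ∧
      M = L.prod := by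
  obtain ⟨L, hL⟩ := tp_main n M hM
  refine ⟨L.map toMatrix, ?_, hL⟩
  intro N hN
  obtain ⟨t, _, rfl⟩ := List.mem_map.mp hN
  exact ⟨t.i, t.j, t.c, t.hij, rfl⟩
end

section
/- Let A be a commutative local ring and g ∈ GL_n(A). Then g can be written as a product E · diag(det g, 1, …, 1), where E is a finite product of elementary transvections. -/
open Matrix Finset

section Whitehead
variable {n : Type*} [DecidableEq n] [Fintype n] {R : Type*} [CommRing R]

/-- matrix that is the identity outside the `{i,j}` block -/
def twoBlk (i j : n) (x11 x12 x21 x22 : R) : Matrix n n R :=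
  Matrix.of fun a b =>
    if a = i then (if b = i then x11 else if b = j then x12 else 0)
    else if a = j then (if b = i then x21 else if b = j then x22 else 0)
    else if a = b then (1:R) else 0

theorem twoBlk_congr {i j : n} {x11 x12 x21 x22 y11 y12 y21 y22 : R}
    (h1 : x11 = y11) (h2 : x12 = y12) (h3 : x21 = y21) (h4 : x22 = y22) :
    twoBlk i j x11 x12 x21 x22 = twoBlk i j y11 y12 y21 y22 := by
  rw [h1, h2, h3, h4]

theorem transvection_eq_twoBlk (i j : n) (h : i ≠ j) (c : R) :
    transvection i j c = twoBlk i j 1 c 0 1 := by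
  have hji := h.symm
  ext a b
  simp only [transvection, twoBlk, Matrix.add_apply, one_apply, Matrix.single, of_apply,
    Matrix.smul_apply, smul_eq_mul]
  try split_ifs <;> (try obtain ⟨rfl, rfl⟩ := ‹_ ∧ _›) <;> subst_vars <;>
    first | rfl | ring1 | simp_all

theorem twoBlk_mul_tij (i j : n) (h : i ≠ j) (x11 x12 x21 x22 c : R) :
    twoBlk i j x11 x12 x21 x22 * transvection i j c
      = twoBlk i j x11 (x12 + c * x11) x21 (x22 + c * x21) := by
  have hji := h.symm
  ext a b
  rcases eq_or_ne b j with hbj | hbj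
  · rw [hbj, mul_transvection_apply_same]
    simp only [twoBlk, of_apply, if_neg hji, if_pos rfl, if_neg h]
    try split_ifs <;> (try obtain ⟨rfl, rfl⟩ := ‹_ ∧ _›) <;> subst_vars <;>
      first | rfl | ring1 | simp_all
  · rw [mul_transvection_apply_of_ne _ _ _ _ hbj]
    simp only [twoBlk, of_apply, if_neg hbj]
    try split_ifs <;> (try obtain ⟨rfl, rfl⟩ := ‹_ ∧ _›) <;> subst_vars <;>
      first | rfl | ring1 | simp_all

theorem twoBlk_mul_tji (i j : n) (h : i ≠ j) (x11 x12 x21 x22 c : R) :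
    twoBlk i j x11 x12 x21 x22 * transvection j i c
      = twoBlk i j (x11 + c * x12) x12 (x21 + c * x22) x22 := by
  have hji := h.symm
  ext a b
  rcases eq_or_ne b i with hbi | hbi
  · rw [hbi, mul_transvection_apply_same]
    simp only [twoBlk, of_apply, if_neg hji, if_pos rfl, if_neg h]
    try split_ifs <;> (try obtain ⟨rfl, rfl⟩ := ‹_ ∧ _›) <;> subst_vars <;>
      first | rfl | ring1 | simp_all
  · rw [mul_transvection_apply_of_ne _ _ _ _ hbi]
    simp only [twoBlk, of_apply, if_neg hbi]
    try split_ifs <;> (try obtain ⟨rfl, rfl⟩ := ‹_ ∧ _›) <;> subst_vars <;>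
      first | rfl | ring1 | simp_all

theorem twoBlk_eq_diagonal (i j : n) (h : i ≠ j) (u v : R) :
    twoBlk i j u 0 0 v = diagonal (fun k => if k = i then u else if k = j then v else 1) := by
  have hji := h.symm
  ext a b
  simp only [twoBlk, of_apply, diagonal_apply]
  try split_ifs <;> (try obtain ⟨rfl, rfl⟩ := ‹_ ∧ _›) <;> subst_vars <;>
    first | rfl | ring1 | simp_all

theorem whitehead_diag (i j : n) (h : i ≠ j) (u : Rˣ) :
    transvection i j (u:R) * transvection j i (-(↑u⁻¹:R)) * transvection i j (u:R) *
      transvection i j (-1) * transvection j i 1 * transvection i j (-1) =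
      diagonal (fun k => if k = i then (u:R) else if k = j then (↑u⁻¹:R) else 1) := by
  have s2 : transvection i j (u:R) * transvection j i (-(↑u⁻¹:R))
      = twoBlk i j 0 (u:R) (-(↑u⁻¹:R)) 1 := by
    rw [transvection_eq_twoBlk i j h, twoBlk_mul_tji i j h]
    exact twoBlk_congr (by simp) (by simp) (by simp) (by simp)
  have s3 : transvection i j (u:R) * transvection j i (-(↑u⁻¹:R)) * transvection i j (u:R)
      = twoBlk i j 0 (u:R) (-(↑u⁻¹:R)) 0 := by
    rw [s2, twoBlk_mul_tij i j h]
    exact twoBlk_congr (by simp) (by simp) (by simp) (by simp [mul_comm])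
  have s4 : transvection i j (u:R) * transvection j i (-(↑u⁻¹:R)) * transvection i j (u:R)
      * transvection i j (-1) = twoBlk i j 0 (u:R) (-(↑u⁻¹:R)) (↑u⁻¹:R) := by
    rw [s3, twoBlk_mul_tij i j h]
    exact twoBlk_congr (by simp) (by simp) (by simp) (by simp)
  have s5 : transvection i j (u:R) * transvection j i (-(↑u⁻¹:R)) * transvection i j (u:R)
      * transvection i j (-1) * transvection j i 1
      = twoBlk i j (u:R) (u:R) 0 (↑u⁻¹:R) := by
    rw [s4, twoBlk_mul_tji i j h]
    exact twoBlk_congr (by simp) (by simp) (by simp) (by simp)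
  have s6 : transvection i j (u:R) * transvection j i (-(↑u⁻¹:R)) * transvection i j (u:R)
      * transvection i j (-1) * transvection j i 1 * transvection i j (-1)
      = twoBlk i j (u:R) 0 0 (↑u⁻¹:R) := by
    rw [s5, twoBlk_mul_tij i j h]
    exact twoBlk_congr (by simp) (by simp) (by simp) (by simp)
  rw [s6, twoBlk_eq_diagonal i j h]

/-- transvection predicate matching the target statement -/
def IsTrv (N : Matrix n n R) : Prop :=
  ∃ (i j : n) (c : R), i ≠ j ∧ N = Matrix.transvection i j c

theorem whitehead_exists (i j : n) (h : i ≠ j) (u : Rˣ) :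
    ∃ L : List (Matrix n n R), (∀ N ∈ L, IsTrv N) ∧
      L.prod = diagonal (fun k => if k = i then (u:R) else if k = j then (↑u⁻¹:R) else 1) := by
  refine ⟨[transvection i j (u:R), transvection j i (-(↑u⁻¹:R)), transvection i j (u:R),
    transvection i j (-1), transvection j i 1, transvection i j (-1)], ?_, ?_⟩
  · rintro N hN
    simp only [List.mem_cons, List.not_mem_nil, or_false] at hN
    rcases hN with rfl | rfl | rfl | rfl | rfl | rfl
    exacts [⟨i, j, _, h, rfl⟩, ⟨j, i, _, h.symm, rfl⟩, ⟨i, j, _, h, rfl⟩,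
      ⟨i, j, _, h, rfl⟩, ⟨j, i, _, h.symm, rfl⟩, ⟨i, j, _, h, rfl⟩]
  · simp only [List.prod_cons, List.prod_nil, mul_one, ← Matrix.mul_assoc]
    exact whitehead_diag i j h u

end Whitehead
section ColRow
variable {n : Type*} [DecidableEq n] [Fintype n] {R : Type*} [CommRing R]

/-- the "column operations" matrix: add `v a` times row `q` to each row `a ≠ q` -/
def colOps (q : n) (v : n → R) : Matrix n n R :=
  Matrix.of fun a b =>
    (if a = b then (1:R) else 0) + (if b = q ∧ a ≠ q then v a else 0)

/-- the "row operations" matrix (for right multiplication) -/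
def rowOps (q : n) (w : n → R) : Matrix n n R :=
  Matrix.of fun a b =>
    (if a = b then (1:R) else 0) + (if a = q ∧ b ≠ q then w b else 0)

theorem list_col_prod (q : n) (v : n → R) :
    ∀ l : List n, l.Nodup → (∀ x ∈ l, x ≠ q) →
      (l.map fun x => transvection x q (v x)).prod
        = Matrix.of fun a b =>
            (if a = b then (1:R) else 0) + (if b = q ∧ a ∈ l then v a else 0) := by
  intro l
  induction l with
  | nil => intro _ _; ext a b; simp [one_apply]
  | cons x l ih =>
    intro hnd hne
    have hxl : x ∉ l := (List.nodup_cons.mp hnd).1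
    have hnd' : l.Nodup := (List.nodup_cons.mp hnd).2
    have hxq : x ≠ q := hne x (List.mem_cons_self)
    have hql : q ∉ l := fun hq => (hne q (List.mem_cons_of_mem _ hq)) rfl
    rw [List.map_cons, List.prod_cons, ih hnd' (fun y hy => hne y (List.mem_cons_of_mem _ hy))]
    ext a b
    rcases eq_or_ne a x with rfl | hax
    · rw [transvection_mul_apply_same]
      simp only [of_apply, hxl, hql, List.mem_cons, or_false, hxq]
      split_ifs <;> subst_vars <;> first | rfl | ring1 | simp_all
    · rw [transvection_mul_apply_of_ne _ _ _ _ hax]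
      simp only [of_apply, List.mem_cons, hax, false_or]
end ColRow
section ColRow2
variable {n : Type*} [DecidableEq n] [Fintype n] {R : Type*} [CommRing R]

theorem colOps_eq_prod (q : n) (v : n → R) :
    ∃ L : List (Matrix n n R), (∀ N ∈ L, IsTrv N) ∧ L.prod = colOps q v := by
  refine ⟨(Finset.univ.erase q).toList.map fun x => transvection x q (v x), ?_, ?_⟩
  · intro N hN
    simp only [List.mem_map] at hN
    obtain ⟨x, hx, rfl⟩ := hN
    exact ⟨x, q, v x, by simpa using (Finset.mem_toList.mp hx), rfl⟩
  · rw [list_col_prod q v _ (Finset.nodup_toList _)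
      (fun x hx => by simpa using (Finset.mem_toList.mp hx))]
    unfold colOps
    ext a b
    simp [Finset.mem_toList]

theorem transvection_transpose (i j : n) (c : R) :
    (transvection i j c)ᵀ = transvection j i c := by
  ext a b
  simp only [transvection, transpose_apply, Matrix.add_apply, one_apply, Matrix.smul_apply,
    Matrix.single, of_apply, smul_eq_mul]
  split_ifs <;> (try obtain ⟨rfl, rfl⟩ := ‹_ ∧ _›) <;> subst_vars <;>
    first | rfl | ring1 | simp_all

theorem rowOps_eq_transpose (q : n) (w : n → R) : rowOps q w = (colOps q w)ᵀ := by
  ext a b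
  simp only [rowOps, colOps, transpose_apply, of_apply]
  split_ifs <;> subst_vars <;> first | rfl | ring1 | simp_all

theorem rowOps_eq_prod (q : n) (w : n → R) :
    ∃ L : List (Matrix n n R), (∀ N ∈ L, IsTrv N) ∧ L.prod = rowOps q w := by
  obtain ⟨L, hL, hLp⟩ := colOps_eq_prod q w
  refine ⟨(L.map transpose).reverse, ?_, ?_⟩
  · intro N hN
    simp only [List.mem_reverse, List.mem_map] at hN
    obtain ⟨N', hN', rfl⟩ := hN
    obtain ⟨i, j, c, hij, rfl⟩ := hL N' hN'
    exact ⟨j, i, c, hij.symm, transvection_transpose i j c⟩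
  · rw [rowOps_eq_transpose, ← hLp, transpose_list_prod]

theorem colOps_mul (q : n) (v : n → R) (M : Matrix n n R) (a b : n) :
    (colOps q v * M) a b = M a b + (if a = q then 0 else v a * M q b) := by
  rw [mul_apply]
  simp only [colOps, of_apply, add_mul, ite_mul, one_mul, zero_mul, Finset.sum_add_distrib]
  rw [Finset.sum_ite_eq _ a (fun c => M c b)]
  by_cases haq : a = q
  · simp [haq]
  · simp only [haq, ne_eq, not_false_eq_true, and_true, if_neg, if_true, Finset.mem_univ,
      if_false]
    rw [show (∑ c, if c = q then v a * M c b else 0) = ∑ c, if c = q then v a * M q b else 0 by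
      apply Finset.sum_congr rfl; intro c _; split_ifs with h; rw [h]; rfl]
    simp

theorem mul_rowOps (q : n) (w : n → R) (M : Matrix n n R) (a b : n) :
    (M * rowOps q w) a b = M a b + (if b = q then 0 else w b * M a q) := by
  rw [mul_apply]
  simp only [rowOps, of_apply, mul_add, mul_ite, mul_one, mul_zero, Finset.sum_add_distrib]
  rw [Finset.sum_ite_eq' _ b (fun c => M a c)]
  by_cases hbq : b = q
  · simp [hbq]
  · simp only [hbq, ne_eq, not_false_eq_true, and_true, if_true, Finset.mem_univ, if_false]
    rw [show (∑ c, if c = q then M a c * w b else 0) = ∑ c, if c = q then M a q * w b else 0 by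
      apply Finset.sum_congr rfl; intro c _; split_ifs with h; rw [h]; rfl]
    simp [mul_comm]
end ColRow2
section LocalLemmas
variable {n : Type*} [DecidableEq n] [Fintype n] {A : Type*} [CommRing A] [IsLocalRing A]

theorem isUnit_add_of_nonunit {x u : A} (hx : ¬IsUnit x) (hu : IsUnit u) : IsUnit (x + u) := by
  by_contra hxu
  have h1 : x ∈ IsLocalRing.maximalIdeal A := hx
  have h2 : x + u ∈ IsLocalRing.maximalIdeal A := hxu
  have h3 : u ∈ IsLocalRing.maximalIdeal A := by
    have := Submodule.sub_mem _ h2 h1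
    simpa using this
  exact (IsLocalRing.mem_maximalIdeal u).mp h3 hu

theorem exists_unit_col (s : Finset n) (q : n) (hq : q ∈ s) (M : Matrix n n A)
    (hdet : IsUnit M.det) (hM : ∀ a b, a ≠ b → (a ∉ s ∨ b ∉ s) → M a b = 0) :
    ∃ a ∈ s, IsUnit (M a q) := by
  by_contra h
  push_neg at h
  have hm : M.det ∈ IsLocalRing.maximalIdeal A := by
    rw [Matrix.det_apply']
    refine Ideal.sum_mem _ fun σ _ => Ideal.mul_mem_left _ _ ?_
    rw [← Finset.mul_prod_erase Finset.univ _ (Finset.mem_univ q)]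
    refine Ideal.mul_mem_right _ _ ?_
    by_cases hσ : σ q ∈ s
    · exact (IsLocalRing.mem_maximalIdeal _).mpr (h _ hσ)
    · have hne : σ q ≠ q := fun e => hσ (by rw [e]; exact hq)
      rw [hM _ _ hne (Or.inl hσ)]
      exact zero_mem _
  exact (IsLocalRing.mem_maximalIdeal _).mp hm hdet

omit [IsLocalRing A] in
theorem det_trv_list {L : List (Matrix n n A)} (hL : ∀ N ∈ L, IsTrv N) : L.prod.det = 1 := by
  induction L with
  | nil => simp
  | cons N L ih =>
    rw [List.prod_cons, det_mul, ih (fun N' h => hL N' (List.mem_cons_of_mem _ h))]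
    obtain ⟨i, j, c, hij, rfl⟩ := hL N (List.mem_cons_self)
    rw [det_transvection_of_ne _ _ hij, one_mul]
end LocalLemmas
section Elim
variable {n : Type*} [DecidableEq n] [Fintype n] {A : Type*} [CommRing A] [IsLocalRing A]

theorem elim_aux (s : Finset n) :
    ∀ M : Matrix n n A, IsUnit M.det →
      (∀ a b, a ≠ b → (a ∉ s ∨ b ∉ s) → M a b = 0) →
      ∃ (L L' : List (Matrix n n A)) (D : n → A),
        (∀ N ∈ L, IsTrv N) ∧ (∀ N ∈ L', IsTrv N) ∧ L.prod * M * L'.prod = diagonal D := by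
  induction s using Finset.strongInduction with
  | _ s IH =>
  intro M hdet hM
  rcases s.eq_empty_or_nonempty with rfl | ⟨q, hq⟩
  · refine ⟨[], [], fun a => M a a, by simp, by simp, ?_⟩
    simp only [List.prod_nil, one_mul, mul_one]
    ext a b
    rcases eq_or_ne a b with rfl | hab
    · rw [diagonal_apply_eq]
    · rw [diagonal_apply_ne _ hab, hM a b hab (Or.inl (Finset.notMem_empty a))]
  · -- step 1: make the pivot at (q,q) a unit
    obtain ⟨L₀, hL₀, M₁, hM₁, hstr₁, hu₁⟩ :
        ∃ L₀ : List (Matrix n n A), (∀ N ∈ L₀, IsTrv N) ∧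
          ∃ M₁ : Matrix n n A, M₁ = L₀.prod * M ∧
            (∀ a b, a ≠ b → (a ∉ s ∨ b ∉ s) → M₁ a b = 0) ∧ IsUnit (M₁ q q) := by
      by_cases hMqq : IsUnit (M q q)
      · exact ⟨[], by simp, M, by simp, hM, hMqq⟩
      · obtain ⟨a, has, ha⟩ := exists_unit_col s q hq M hdet hM
        have haq : a ≠ q := fun e => hMqq (by rwa [e] at ha)
        refine ⟨[transvection q a 1], ?_, transvection q a 1 * M, by simp, ?_, ?_⟩
        · intro N hN
          simp only [List.mem_cons, List.not_mem_nil, or_false] at hN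
          exact hN ▸ ⟨q, a, 1, haq.symm, rfl⟩
        · intro x y hxy hout
          by_cases hxq : x = q
          · rw [hxq, transvection_mul_apply_same, one_mul]
            have hys : y ∉ s := by
              rcases hout with h | h
              · exact absurd hq (hxq ▸ h)
              · exact h
            have hay : a ≠ y := fun e => hys (e ▸ has)
            rw [hM q y (hxq ▸ hxy) (Or.inr hys), hM a y hay (Or.inr hys), add_zero]
          · rw [transvection_mul_apply_of_ne _ _ _ _ hxq, hM x y hxy hout]
        · rw [transvection_mul_apply_same, one_mul]
          exact isUnit_add_of_nonunit hMqq ha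
    obtain ⟨uu, huu⟩ := hu₁
    set v : n → A := fun x => -(M₁ x q) * (↑uu⁻¹ : A) with hv
    set w : n → A := fun x => -(M₁ q x) * (↑uu⁻¹ : A) with hw
    set N₂ : Matrix n n A := colOps q v * M₁ with hN₂def
    set N : Matrix n n A := N₂ * rowOps q w with hNdef
    have hN₂ : ∀ a b, N₂ a b = M₁ a b + (if a = q then 0 else v a * M₁ q b) :=
      fun a b => colOps_mul q v M₁ a b
    have hN : ∀ a b, N a b = N₂ a b + (if b = q then 0 else w b * N₂ a q) :=
      fun a b => mul_rowOps q w N₂ a b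
    have hcancel : ∀ x : A, x + -x * (↑uu⁻¹ : A) * M₁ q q = 0 := by
      intro x
      rw [← huu, mul_assoc, Units.inv_mul, mul_one, add_neg_cancel]
    have hN₂rowq : ∀ b, N₂ q b = M₁ q b := by intro b; rw [hN₂]; simp
    have hN₂colq : ∀ a, a ≠ q → N₂ a q = 0 := by
      intro a haq
      rw [hN₂, if_neg haq]
      have hva : v a = -(M₁ a q) * (↑uu⁻¹ : A) := rfl
      rw [hva]
      exact hcancel _
    have hNqq : N q q = M₁ q q := by
      rw [hN, if_pos rfl, add_zero, hN₂rowq]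
    have hNcol : ∀ a, a ≠ q → N a q = 0 := by
      intro a haq
      rw [hN, if_pos rfl, add_zero, hN₂colq a haq]
    have hNrow : ∀ b, b ≠ q → N q b = 0 := by
      intro b hbq
      rw [hN, if_neg hbq, hN₂rowq, hN₂rowq]
      have hwb : w b = -(M₁ q b) * (↑uu⁻¹ : A) := rfl
      rw [hwb]
      exact hcancel _
    have hstrN : ∀ a b, a ≠ b → (a ∉ s.erase q ∨ b ∉ s.erase q) → N a b = 0 := by
      intro a b hab hout
      by_cases hbq : b = q
      · subst hbq
        exact hNcol a hab
      by_cases haq : a = q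
      · subst haq
        exact hNrow b hbq
      have hout' : a ∉ s ∨ b ∉ s := by
        rcases hout with h | h
        · exact Or.inl fun hs => h (Finset.mem_erase.mpr ⟨haq, hs⟩)
        · exact Or.inr fun hs => h (Finset.mem_erase.mpr ⟨hbq, hs⟩)
      rcases hout' with ha | hb
      · have h1 : M₁ a b = 0 := hstr₁ a b hab (Or.inl ha)
        have h2 : M₁ a q = 0 := hstr₁ a q haq (Or.inl ha)
        have hva : v a = 0 := by simp [hv, h2]
        have h3 : N₂ a b = 0 := by rw [hN₂, if_neg haq, h1, hva, zero_mul, add_zero]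
        have h4 : N₂ a q = 0 := hN₂colq a haq
        rw [hN, if_neg hbq, h3, h4, mul_zero, add_zero]
      · have hqb : q ≠ b := fun e => hbq e.symm
        have h1 : M₁ a b = 0 := hstr₁ a b hab (Or.inr hb)
        have h2 : M₁ q b = 0 := hstr₁ q b hqb (Or.inr hb)
        have hwb : w b = 0 := by simp [hw, h2]
        have h3 : N₂ a b = 0 := by rw [hN₂, if_neg haq, h1, h2, mul_zero, add_zero]
        rw [hN, if_neg hbq, h3, hwb, zero_mul, add_zero]
    obtain ⟨LPL, hLPL, hLPLp⟩ := colOps_eq_prod q v (R := A) (n := n)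
    obtain ⟨LPR, hLPR, hLPRp⟩ := rowOps_eq_prod q w (R := A) (n := n)
    have hdetN : IsUnit N.det := by
      rw [hNdef, hN₂def, hM₁, det_mul, det_mul, det_mul, ← hLPLp, ← hLPRp,
        det_trv_list hLPL, det_trv_list hLPR, det_trv_list hL₀]
      simpa using hdet
    obtain ⟨L1, L1', D, h1, h1', heq⟩ := IH (s.erase q) (Finset.erase_ssubset hq) N hdetN hstrN
    refine ⟨L1 ++ LPL ++ L₀, LPR ++ L1', D, ?_, ?_, ?_⟩
    · intro N' hN'
      simp only [List.mem_append] at hN'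
      rcases hN' with (h | h) | h
      exacts [h1 N' h, hLPL N' h, hL₀ N' h]
    · intro N' hN'
      simp only [List.mem_append] at hN'
      rcases hN' with h | h
      exacts [hLPR N' h, h1' N' h]
    · have : (L1 ++ LPL ++ L₀).prod * M * (LPR ++ L1').prod
          = L1.prod * N * L1'.prod := by
        simp only [List.prod_append, hLPLp, hLPRp, hNdef, hN₂def, hM₁, Matrix.mul_assoc]
      rw [this, heq]
end Elim
section DiagStuff
variable {n : Type*} [DecidableEq n] [Fintype n] {R : Type*} [CommRing R]

theorem diagonal_mul_transvection_comm {D : n → R} (hD : ∀ i, IsUnit (D i))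
    (i j : n) (h : i ≠ j) (c : R) :
    ∃ c' : R, diagonal D * transvection i j c = transvection i j c' * diagonal D := by
  obtain ⟨uj, huj⟩ := hD j
  refine ⟨c * D i * (↑uj⁻¹ : R), ?_⟩
  have haux : (c * D i * (↑uj⁻¹ : R)) * (↑uj : R) = c * D i := by
    rw [mul_assoc, Units.inv_mul, mul_one]
  ext a b
  rw [diagonal_mul, mul_diagonal]
  simp only [transvection, Matrix.add_apply, one_apply, Matrix.smul_apply, Matrix.single, of_apply,
    smul_eq_mul]
  split_ifs with h1 h2 h3
  · obtain ⟨rfl, rfl⟩ := h2; exact absurd h1 h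
  · subst h1; ring
  · obtain ⟨rfl, rfl⟩ := h3
    rw [zero_add, zero_add, ← huj, haux]
    ring
  · ring

theorem diagonal_mul_trv_list {D : n → R} (hD : ∀ i, IsUnit (D i)) :
    ∀ L : List (Matrix n n R), (∀ N ∈ L, IsTrv N) →
      ∃ K : List (Matrix n n R), (∀ N ∈ K, IsTrv N) ∧
        diagonal D * L.prod = K.prod * diagonal D := by
  intro L
  induction L with
  | nil => exact fun _ => ⟨[], by simp, by simp⟩
  | cons N L ih =>
    intro hL
    obtain ⟨K, hK, hKp⟩ := ih fun N' h => hL N' (List.mem_cons_of_mem _ h)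
    obtain ⟨i, j, c, hij, rfl⟩ := hL N (List.mem_cons_self)
    obtain ⟨c', hc'⟩ := diagonal_mul_transvection_comm hD i j hij c
    refine ⟨transvection i j c' :: K, ?_, ?_⟩
    · intro N' hN'
      rcases List.mem_cons.mp hN' with rfl | h
      exacts [⟨i, j, c', hij, rfl⟩, hK N' h]
    · rw [List.prod_cons, List.prod_cons, ← Matrix.mul_assoc, hc', Matrix.mul_assoc, hKp,
        ← Matrix.mul_assoc]

theorem trv_list_inv :
    ∀ L : List (Matrix n n R), (∀ N ∈ L, IsTrv N) →
      ∃ K : List (Matrix n n R), (∀ N ∈ K, IsTrv N) ∧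
        K.prod * L.prod = 1 ∧ L.prod * K.prod = 1 := by
  intro L
  induction L with
  | nil => exact fun _ => ⟨[], by simp, by simp, by simp⟩
  | cons N L ih =>
    intro hL
    obtain ⟨K, hK, hK1, hK2⟩ := ih fun N' h => hL N' (List.mem_cons_of_mem _ h)
    obtain ⟨i, j, c, hij, rfl⟩ := hL N (List.mem_cons_self)
    refine ⟨K ++ [transvection i j (-c)], ?_, ?_, ?_⟩
    · intro N' hN'
      rcases List.mem_append.mp hN' with h | h
      · exact hK N' h
      · rcases List.mem_singleton.mp h with rfl
        exact ⟨i, j, -c, hij, rfl⟩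
    · simp only [List.prod_append, List.prod_cons, List.prod_nil, Matrix.mul_one]
      calc K.prod * transvection i j (-c) * (transvection i j c * L.prod)
          = K.prod * (transvection i j (-c) * transvection i j c) * L.prod := by
            simp only [Matrix.mul_assoc]
        _ = K.prod * L.prod := by
            rw [transvection_mul_transvection_same _ _ hij, neg_add_cancel, transvection_zero,
              Matrix.mul_one]
        _ = 1 := hK1
    · simp only [List.prod_append, List.prod_cons, List.prod_nil, Matrix.mul_one]
      calc transvection i j c * L.prod * (K.prod * transvection i j (-c))
          = transvection i j c * (L.prod * K.prod) * transvection i j (-c) := by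
            simp only [Matrix.mul_assoc]
        _ = transvection i j c * transvection i j (-c) := by rw [hK2, Matrix.mul_one]
        _ = 1 := by
            rw [transvection_mul_transvection_same _ _ hij, add_neg_cancel, transvection_zero]

theorem merge_diag {z : n} :
    ∀ s : Finset n, z ∉ s → ∀ D : n → R, (∀ i, IsUnit (D i)) →
      ∃ L : List (Matrix n n R), (∀ N ∈ L, IsTrv N) ∧
        diagonal D = L.prod *
          diagonal (fun k => if k = z then D z * ∏ j ∈ s, D j else if k ∈ s then 1 else D k) := by
  intro s
  induction s using Finset.induction_on with
  | empty =>
    intro _ D _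
    refine ⟨[], by simp, ?_⟩
    have hfun : (fun k => if k = z then D z * ∏ j ∈ (∅ : Finset n), D j
        else if k ∈ (∅ : Finset n) then (1:R) else D k) = D := by
      funext k
      by_cases hk : k = z <;> simp [hk]
    rw [List.prod_nil, one_mul, hfun]
  | @insert a s ha ih =>
    intro hz D hD
    have hza : z ≠ a := fun e => hz (e ▸ Finset.mem_insert_self a s)
    have hzs : z ∉ s := fun e => hz (Finset.mem_insert_of_mem e)
    obtain ⟨ua, hua⟩ := hD a
    obtain ⟨W, hW, hWp⟩ := whitehead_exists z a hza ua⁻¹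
    set D₁ : n → R := fun k => if k = z then D z * D a else if k = a then 1 else D k with hD₁
    have hD₁u : ∀ i, IsUnit (D₁ i) := by
      intro i
      rw [hD₁]
      dsimp only
      split_ifs
      · exact (hD z).mul (hD a)
      · exact isUnit_one
      · exact hD i
    obtain ⟨L₁, hL₁, hL₁p⟩ := ih hzs D₁ hD₁u
    have key : diagonal D = W.prod * diagonal D₁ := by
      rw [hWp, diagonal_mul_diagonal]
      have hfun : (fun i => (if i = z then ((ua⁻¹ : Rˣ) : R)
          else if i = a then ((ua⁻¹⁻¹ : Rˣ) : R) else 1) * D₁ i) = D := by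
        funext k
        simp only [hD₁]
        by_cases hkz : k = z
        · rw [hkz, if_pos rfl, if_pos rfl, ← hua, mul_comm (D z), ← mul_assoc,
            Units.inv_mul, one_mul]
        · rw [if_neg hkz, if_neg hkz]
          by_cases hka : k = a
          · rw [hka, if_pos rfl, if_pos rfl, mul_one, inv_inv, hua]
          · rw [if_neg hka, if_neg hka, one_mul]
      rw [hfun]
    have hfin : (fun k => if k = z then D₁ z * ∏ j ∈ s, D₁ j else if k ∈ s then (1:R) else D₁ k)
        = (fun k => if k = z then D z * ∏ j ∈ insert a s, D j
            else if k ∈ insert a s then (1:R) else D k) := by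
      funext k
      by_cases hkz : k = z
      · rw [hkz, if_pos rfl, if_pos rfl, Finset.prod_insert ha]
        have h1 : D₁ z = D z * D a := by simp [hD₁]
        have h2 : ∏ j ∈ s, D₁ j = ∏ j ∈ s, D j := by
          refine Finset.prod_congr rfl fun j hj => ?_
          simp only [hD₁]
          rw [if_neg (fun e : j = z => hzs (e ▸ hj)), if_neg (fun e : j = a => ha (e ▸ hj))]
        rw [h1, h2, mul_assoc]
      · rw [if_neg hkz, if_neg hkz]
        by_cases hka : k = a
        · rw [hka, if_pos (Finset.mem_insert_self a s), if_neg ha]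
          have : a ≠ z := fun e => hkz (hka.trans e)
          simp [hD₁, this]
        · by_cases hks : k ∈ s
          · rw [if_pos hks, if_pos (Finset.mem_insert_of_mem hks)]
          · have hkins : k ∉ insert a s := by
              intro hmem
              rcases Finset.mem_insert.mp hmem with e | e
              · exact hka e
              · exact hks e
            rw [if_neg hks, if_neg hkins]
            simp [hD₁, hkz, hka]
    refine ⟨W ++ L₁, ?_, ?_⟩
    · intro N hN
      rcases List.mem_append.mp hN with h | h
      exacts [hW N h, hL₁ N h]
    · rw [key, hL₁p, hfin]
      simp only [List.prod_append, Matrix.mul_assoc]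
end DiagStuff

/-- Over a commutative local ring, every invertible matrix `g` factors as
`E * diag(det g, 1, …, 1)` where `E` is a finite product of elementary transvections. -/
theorem gl_n_factorization_local
    (A : Type*) [CommRing A] [IsLocalRing A] (n : ℕ)
    (g : GL (Fin (n + 1)) A) :
    ∃ L : List (Matrix (Fin (n + 1)) (Fin (n + 1)) A),
      (∀ N ∈ L, ∃ (i j : Fin (n + 1)) (c : A), i ≠ j ∧ N = Matrix.transvection i j c) ∧
      (g : Matrix (Fin (n + 1)) (Fin (n + 1)) A) =
        L.prod * Matrix.diagonal (fun k => if k = 0 then (g : Matrix (Fin (n + 1)) (Fin (n + 1)) A).det else 1) := by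
  set M : Matrix (Fin (n + 1)) (Fin (n + 1)) A := (g : Matrix (Fin (n + 1)) (Fin (n + 1)) A)
    with hMdef
  have hdet : IsUnit M.det := by
    rw [← Matrix.isUnit_iff_isUnit_det]
    exact ⟨g, rfl⟩
  obtain ⟨L, L', D, hL, hL', heq⟩ := elim_aux (Finset.univ : Finset (Fin (n + 1))) M hdet
    (fun a b _ hout => by rcases hout with h | h <;> exact absurd (Finset.mem_univ _) h)
  have hdetD : M.det = ∏ i, D i := by
    have hc := congrArg Matrix.det heq
    rw [Matrix.det_mul, Matrix.det_mul, det_trv_list hL, det_trv_list hL',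
      Matrix.det_diagonal, one_mul, mul_one] at hc
    exact hc
  have hDu : ∀ i, IsUnit (D i) := by
    intro i
    have hu : IsUnit (∏ j, D j) := hdetD ▸ hdet
    rw [← Finset.mul_prod_erase Finset.univ D (Finset.mem_univ i)] at hu
    exact isUnit_of_mul_isUnit_left hu
  obtain ⟨KL, hKL, hKL1, hKL2⟩ := trv_list_inv L hL
  obtain ⟨KR, hKR, hKR1, hKR2⟩ := trv_list_inv L' hL'
  have hM : M = KL.prod * Matrix.diagonal D * KR.prod := by
    calc M = (KL.prod * L.prod) * M * (L'.prod * KR.prod) := by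
          rw [hKL1, hKR2, Matrix.one_mul, Matrix.mul_one]
      _ = KL.prod * (L.prod * M * L'.prod) * KR.prod := by simp only [Matrix.mul_assoc]
      _ = KL.prod * Matrix.diagonal D * KR.prod := by rw [heq]
  obtain ⟨W, hWt, hWeq⟩ := merge_diag (z := (0 : Fin (n + 1)))
    (Finset.univ.erase 0) (Finset.notMem_erase 0 _) D hDu
  have hfin : (fun k : Fin (n + 1) => if k = 0 then D 0 * ∏ j ∈ Finset.univ.erase 0, D j
      else if k ∈ Finset.univ.erase 0 then (1 : A) else D k)
      = (fun k : Fin (n + 1) => if k = 0 then M.det else 1) := by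
    funext k
    by_cases hk : k = 0
    · rw [hk, if_pos rfl, if_pos rfl,
        Finset.mul_prod_erase Finset.univ D (Finset.mem_univ 0)]
      exact hdetD.symm
    · rw [if_neg hk, if_neg hk, if_pos (Finset.mem_erase.mpr ⟨hk, Finset.mem_univ k⟩)]
  rw [hfin] at hWeq
  have hD₀u : ∀ k : Fin (n + 1), IsUnit (if k = 0 then M.det else (1 : A)) := by
    intro k
    by_cases hk : k = 0
    · rw [if_pos hk]; exact hdet
    · rw [if_neg hk]; exact isUnit_one
  obtain ⟨K2, hK2t, hK2eq⟩ := diagonal_mul_trv_list hD₀u KR hKR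
  refine ⟨KL ++ W ++ K2, ?_, ?_⟩
  · intro N hN
    simp only [List.mem_append] at hN
    rcases hN with (h | h) | h
    exacts [hKL N h, hWt N h, hK2t N h]
  · calc M = KL.prod * (W.prod * Matrix.diagonal fun k => if k = 0 then M.det else 1) * KR.prod := by
          conv_lhs => rw [hM, hWeq]
      _ = KL.prod * W.prod *
            ((Matrix.diagonal fun k => if k = 0 then M.det else 1) * KR.prod) := by
          simp only [Matrix.mul_assoc]
      _ = KL.prod * W.prod *
            (K2.prod * Matrix.diagonal fun k => if k = 0 then M.det else 1) := by
          rw [hK2eq]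
      _ = (KL ++ W ++ K2).prod * Matrix.diagonal fun k => if k = 0 then M.det else 1 := by
          simp only [List.prod_append, Matrix.mul_assoc]
end
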